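/- Let N ≥ 1, let 0 < k₁ < k₂ < ⋯ < k_N be real numbers, and let c̃₁, …, c̃_N ∈ ℝ satisfy (−1)^{j−1}·c̃ⱼ > 0 for j = 1,…,N. Define ψⱼ(x) := e^{kⱼx} + c̃ⱼ·e^{−kⱼx}. Then W[ψ₁, …, ψ_N](x) > 0 for all x ∈ ℝ. -/

import Mathlib

/-- The Wronskian of `n` real functions: determinant of the matrix whose `(j,k)` entry is the
`j`-th derivative (0-based) of the `k`-th function. -/
noncomputable def wronskianR (n : ℕ) (f : Fin n → ℝ → ℝ) (x : ℝ) : ℝ :=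
  (Matrix.of fun j k : Fin n => iteratedDeriv (j : ℕ) (f k) x).det

/-- iterated derivative of `exp (a y) + q exp (b y)`. -/
lemma iteratedDeriv_exp_add_exp (a b q : ℝ) : ∀ n : ℕ,
    iteratedDeriv n (fun y => Real.exp (a * y) + q * Real.exp (b * y)) =
      fun x => a ^ n * Real.exp (a * x) + q * b ^ n * Real.exp (b * x) := by
  intro n
  induction n with
  | zero => funext x; simp
  | succ n ih =>
    rw [iteratedDeriv_succ, ih]
    funext x
    have h1 : HasDerivAt (fun y : ℝ => a * y) a x := by
      simpa using (hasDerivAt_id x).const_mul a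
    have h2 : HasDerivAt (fun y : ℝ => b * y) b x := by
      simpa using (hasDerivAt_id x).const_mul b
    have ha : HasDerivAt (fun y : ℝ => Real.exp (a * y)) (Real.exp (a * x) * a) x :=
      (Real.hasDerivAt_exp (a * x)).comp x h1
    have hb : HasDerivAt (fun y : ℝ => Real.exp (b * y)) (Real.exp (b * x) * b) x :=
      (Real.hasDerivAt_exp (b * x)).comp x h2
    have h : HasDerivAt
        (fun y : ℝ => a ^ n * Real.exp (a * y) + q * b ^ n * Real.exp (b * y))
        (a ^ n * (Real.exp (a * x) * a) + q * b ^ n * (Real.exp (b * x) * b)) x :=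
      (ha.const_mul _).add (hb.const_mul _)
    rw [h.deriv]; ring

lemma swap_prod (N : ℕ) (g : Fin N → Fin N → ℝ) :
    ∏ i : Fin N, ∏ j ∈ Finset.Ioi i, g i j = ∏ j : Fin N, ∏ i ∈ Finset.Iio j, g i j := by
  refine Finset.prod_comm' ?_
  intro i j
  simp [Finset.mem_Ioi, Finset.mem_Iio]

/-- positivity of each term of the multilinear expansion -/
lemma term_pos (N : ℕ) (k c : Fin N → ℝ)
    (hk0 : ∀ j, 0 < k j) (hkmono : StrictMono k)
    (hc : ∀ j : Fin N, 0 < (-1 : ℝ) ^ (j : ℕ) * c j) (x : ℝ) (s : Finset (Fin N)) :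
    0 < (∏ j : Fin N, (if j ∈ s then Real.exp (k j * x) else c j * Real.exp (-(k j) * x))) *
        ∏ i : Fin N, ∏ j ∈ Finset.Ioi i,
          ((if j ∈ s then k j else -(k j)) - (if i ∈ s then k i else -(k i))) := by
  set v : Fin N → ℝ := fun j => if j ∈ s then k j else -(k j) with hv
  have hvub : ∀ j, v j ≤ k j := by
    intro j; by_cases h : j ∈ s <;> simp [hv, h] <;> linarith [hk0 j]
  have hvlb : ∀ j, -(k j) ≤ v j := by
    intro j; by_cases h : j ∈ s <;> simp [hv, h] <;> linarith [hk0 j]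
  rw [swap_prod N (fun i j => v j - v i), ← Finset.prod_mul_distrib]
  apply Finset.prod_pos
  intro j _
  by_cases hjs : j ∈ s
  · simp only [hjs, if_pos]
    apply mul_pos (Real.exp_pos _)
    apply Finset.prod_pos
    intro i hi
    have hij : i < j := Finset.mem_Iio.mp hi
    have : v i ≤ k i := hvub i
    have : k i < k j := hkmono hij
    simp only [hv, hjs, if_pos]
    linarith [hvub i]
  · simp only [hjs, if_neg, if_false]
    have hprod : ∏ i ∈ Finset.Iio j, (v j - v i) =
        (-1 : ℝ) ^ (j : ℕ) * ∏ i ∈ Finset.Iio j, (v i - v j) := by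
      have : ∀ i ∈ Finset.Iio j, (v j - v i) = (-1) * (v i - v j) := by intros; ring
      rw [Finset.prod_congr rfl this, Finset.prod_mul_distrib, Finset.prod_const,
        Fin.card_Iio]
    rw [hprod]
    have hpos : 0 < ∏ i ∈ Finset.Iio j, (v i - v j) := by
      apply Finset.prod_pos
      intro i hi
      have hij : i < j := Finset.mem_Iio.mp hi
      have h1 : -(k i) ≤ v i := hvlb i
      have h2 : k i < k j := hkmono hij
      have : v j = -(k j) := by simp [hv, hjs]
      rw [this]; linarith
    have h0 := hc j
    have hexp := Real.exp_pos (-(k j) * x)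
    have key : c j * Real.exp (-(k j) * x) * ((-1 : ℝ) ^ (j : ℕ) * ∏ i ∈ Finset.Iio j, (v i - v j)) =
        ((-1 : ℝ) ^ (j : ℕ) * c j) * (Real.exp (-(k j) * x) * ∏ i ∈ Finset.Iio j, (v i - v j)) := by
      ring
    rw [key]
    exact mul_pos h0 (mul_pos hexp hpos)

theorem stmt_15 (N : ℕ) (hN : 1 ≤ N) (k c : Fin N → ℝ)
    (hk0 : ∀ j, 0 < k j) (hkmono : StrictMono k)
    (hc : ∀ j : Fin N, 0 < (-1 : ℝ) ^ (j : ℕ) * c j) :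
    ∀ x : ℝ,
      0 < wronskianR N
        (fun j => fun y => Real.exp (k j * y) + c j * Real.exp (-(k j) * y)) x := by
  intro x
  -- rewrite the Wronskian matrix explicitly
  have hmat : wronskianR N
      (fun j => fun y => Real.exp (k j * y) + c j * Real.exp (-(k j) * y)) x =
      (Matrix.of fun i j : Fin N =>
        (k j) ^ (i : ℕ) * Real.exp (k j * x) +
          c j * (-(k j)) ^ (i : ℕ) * Real.exp (-(k j) * x)).det := by
    unfold wronskianR
    congr 1
    funext i j
    simp only [Matrix.of_apply]
    rw [iteratedDeriv_exp_add_exp (k j) (-(k j)) (c j) (i : ℕ)]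
  rw [hmat, ← Matrix.det_transpose]
  -- the transposed matrix as sum of two families of scaled vandermonde rows
  set a : Fin N → ℝ := fun j => Real.exp (k j * x) with ha
  set b : Fin N → ℝ := fun j => c j * Real.exp (-(k j) * x) with hb
  set u : Fin N → (Fin N → ℝ) := fun j => fun m => (k j) ^ (m : ℕ) with hu
  set w : Fin N → (Fin N → ℝ) := fun j => fun m => (-(k j)) ^ (m : ℕ) with hw
  have hT : Matrix.transpose (Matrix.of fun i j : Fin N =>
        (k j) ^ (i : ℕ) * Real.exp (k j * x) +
          c j * (-(k j)) ^ (i : ℕ) * Real.exp (-(k j) * x)) =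
      ((fun j => a j • u j) + (fun j => b j • w j)) := by
    funext j i
    simp only [Matrix.transpose_apply, Matrix.of_apply, Pi.add_apply, Pi.smul_apply,
      smul_eq_mul, ha, hb, hu, hw]
    ring
  rw [hT]
  have hdet : ∀ M : Matrix (Fin N) (Fin N) ℝ,
      M.det = Matrix.detRowAlternating M := fun _ => rfl
  show 0 < Matrix.det ((fun j => a j • u j) + (fun j => b j • w j))
  show 0 < Matrix.detRowAlternating ((fun j => a j • u j) + (fun j => b j • w j))
  have hexp := (Matrix.detRowAlternating :
      AlternatingMap ℝ (Fin N → ℝ) ℝ (Fin N)).toMultilinearMap.map_add_univ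
      (fun j => a j • u j) (fun j => b j • w j)
  erw [hexp]
  -- evaluate each term
  have hterm : ∀ s : Finset (Fin N),
      (Matrix.detRowAlternating : AlternatingMap ℝ (Fin N → ℝ) ℝ (Fin N)).toMultilinearMap
        (s.piecewise (fun j => a j • u j) (fun j => b j • w j)) =
      (∏ j : Fin N, (if j ∈ s then Real.exp (k j * x) else c j * Real.exp (-(k j) * x))) *
        ∏ i : Fin N, ∏ j ∈ Finset.Ioi i,
          ((if j ∈ s then k j else -(k j)) - (if i ∈ s then k i else -(k i))) := by
    intro s
    have hpw : s.piecewise (fun j => a j • u j) (fun j => b j • w j) =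
        fun j => (s.piecewise a b j) • (s.piecewise u w j) := by
      funext j
      by_cases h : j ∈ s <;> simp [Finset.piecewise, h]
    rw [hpw, MultilinearMap.map_smul_univ]
    have harg : s.piecewise u w =
        Matrix.vandermonde (fun j => if j ∈ s then k j else -(k j)) := by
      funext j m
      by_cases h : j ∈ s <;> simp [Matrix.vandermonde, Finset.piecewise, h, hu, hw]
    have hvd : (Matrix.detRowAlternating : AlternatingMap ℝ (Fin N → ℝ) ℝ (Fin N)).toMultilinearMap
        (s.piecewise u w) =
        (Matrix.vandermonde (fun j => if j ∈ s then k j else -(k j))).det := by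
      rw [harg]; rfl
    rw [hvd, Matrix.det_vandermonde, smul_eq_mul]
    congr 1
  calc (0:ℝ) < ∑ s : Finset (Fin N),
        ((∏ j : Fin N, (if j ∈ s then Real.exp (k j * x) else c j * Real.exp (-(k j) * x))) *
          ∏ i : Fin N, ∏ j ∈ Finset.Ioi i,
            ((if j ∈ s then k j else -(k j)) - (if i ∈ s then k i else -(k i)))) := by
          apply Finset.sum_pos
          · intro s _
            exact term_pos N k c hk0 hkmono hc x s
          · exact ⟨∅, Finset.mem_univ _⟩
    _ = _ := by
          apply Finset.sum_congr rfl
          intro s _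
          exact (hterm s).symm
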